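/- Marginal formula for circle-structured costs via forward matrices (Theorem 4.4): in the circle-structured setting, define λ^{(1,2)} := 𝒦^{(1,2)} and recursively λ^{(1,k)} := λ^{(1,k−1)} (φ^{k−1} ⊙ 𝒦^{(k−1,k)}) for k = 3,…,K (where φ^{k−1} ⊙ A scales the rows of A), and let α^{(k,1)} ∈ ℝ^{n_k×n_1} be given by the backward recursion α^{(ℓ,1)} = 𝒦^{(ℓ,1)} if d(ℓ,1) = 1 and α^{(ℓ,1)} = 𝒦^{(ℓ,ℓ+1)}(φ^{ℓ+1} ⊙ α^{(ℓ+1,1)}) otherwise. Then [P_1(𝒦 ⊙ Φ)]_i = φ^1_i Σ_{j=1}^{n_2} 𝒦^{(1,2)}_{i,j} φ^2_j α^{(2,1)}_{j,i} for all i ∈ [n_1], and for every k = 2,…,K and i ∈ [n_k]: [P_k(𝒦 ⊙ Φ)]_i = φ^k_i Σ_{j=1}^{n_1} α^{(k,1)}_{i,j} φ^1_j λ^{(1,k)}_{j,i}. -/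

import Mathlib

set_option linter.unusedSectionVars false
set_option maxHeartbeats 1000000

section aux
variable {K : ℕ} [NeZero K] {n : Fin K → ℕ}

lemma fin_congr₁ (f : ∀ t : Fin K, Fin (n t) → ℝ) {t t' : Fin K} (h : t = t')
    {b : Fin (n t)} {b' : Fin (n t')} (hv : (b : ℕ) = (b' : ℕ)) : f t b = f t' b' := by
  subst h; rw [Fin.ext hv]

lemma fin_congr₂ (f : ∀ s t : Fin K, Fin (n s) → Fin (n t) → ℝ) {s s' t t' : Fin K}
    (hs : s = s') (ht : t = t') {a : Fin (n s)} {a' : Fin (n s')}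
    {b : Fin (n t)} {b' : Fin (n t')}
    (ha : (a : ℕ) = (a' : ℕ)) (hb : (b : ℕ) = (b' : ℕ)) : f s t a b = f s' t' a' b' := by
  subst hs; subst ht; rw [Fin.ext ha, Fin.ext hb]

lemma sum_node_cast {s t : Fin K} (h : s = t) (f : Fin (n s) → ℝ) (g : Fin (n t) → ℝ)
    (hfg : ∀ (a : Fin (n s)) (b : Fin (n t)), (a : ℕ) = (b : ℕ) → f a = g b) :
    ∑ a, f a = ∑ b, g b := by
  subst h; exact Finset.sum_congr rfl fun a _ => hfg a a rfl

lemma jj_val_congr (f : ∀ t : Fin K, Fin (n t)) {s t : Fin K} (h : s = t) :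
    ((f s : ℕ)) = ((f t : ℕ)) := by subst h; rfl

end aux

/-- edge kernel -/
noncomputable def Gk {K d : ℕ} [NeZero K] {n : Fin K → ℕ}
    (x : ∀ k, Fin (n k) → EuclideanSpace ℝ (Fin d))
    (η : ℝ) (s t : Fin K) (a : Fin (n s)) (b : Fin (n t)) : ℝ :=
  Real.exp (-‖x s a - x t b‖ ^ 2 / η)

/-- backward suffix path sum from node ν towards target node k -/
noncomputable def Rfun {K : ℕ} [NeZero K] {n : Fin K → ℕ}
    (G : ∀ s t : Fin K, Fin (n s) → Fin (n t) → ℝ) (φ : ∀ t : Fin K, Fin (n t) → ℝ)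
    (k : Fin K) (i : Fin (n k)) : ℕ → ∀ ν : Fin K, Fin (n ν) → ℝ
  | 0, ν, b => G ν k b i
  | (ρ+1), ν, b => ∑ c : Fin (n (ν + 1)), G ν (ν + 1) b c * (φ (ν + 1) c * Rfun G φ k i ρ (ν + 1) c)

lemma chain_sum_eq : ∀ (N : ℕ) (β : Fin (N+1) → Type) [inst : ∀ m, Fintype (β m)]
    [inst2 : ∀ m, DecidableEq (β m)]
    (w : ∀ m : Fin N, β m.castSucc → β m.succ → ℝ)
    (V : ∀ m : Fin (N+1), β m → ℝ)
    (_hV : ∀ (m : Fin N) (a : β m.castSucc), V m.castSucc a = ∑ c, w m a c * V m.succ c)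
    (a : β 0),
    ∑ jj : (∀ m, β m), (if jj 0 = a then
        (∏ m : Fin N, w m (jj m.castSucc) (jj m.succ)) * V (Fin.last N) (jj (Fin.last N))
      else 0) = V 0 a := by
  intro N
  induction N with
  | zero =>
    intro β _ _ w V hV a
    have hs := Fintype.sum_eq_single
      (f := fun jj : ∀ m, β m => if jj 0 = a then
        (∏ m : Fin 0, w m (jj m.castSucc) (jj m.succ)) * V (Fin.last 0) (jj (Fin.last 0)) else 0)
      (fun m : Fin 1 => _root_.cast (congrArg β (Subsingleton.elim 0 m)) a)
      (by
        intro jj hjj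
        rw [if_neg]
        intro h0
        apply hjj
        funext m
        obtain rfl : (0 : Fin 1) = m := Subsingleton.elim _ _
        exact h0)
    rw [hs]
    split_ifs with h
    · rw [Finset.univ_eq_empty, Finset.prod_empty, one_mul]
      rfl
    · exact absurd rfl h
  | succ N IH =>
    intro β _ _ w V hV a
    rw [← (Fin.consEquiv β).sum_comp, Fintype.sum_prod_type]
    have hstep : ∀ (c : β 0) (rest : ∀ m : Fin (N+1), β m.succ),
        (if (Fin.consEquiv β) (c, rest) 0 = a then
          (∏ m : Fin (N+1), w m ((Fin.consEquiv β) (c, rest) m.castSucc)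
            ((Fin.consEquiv β) (c, rest) m.succ)) *
            V (Fin.last (N+1)) ((Fin.consEquiv β) (c, rest) (Fin.last (N+1))) else 0)
        = if c = a then w 0 a (rest 0) *
            ((∏ m : Fin N, w m.succ (rest m.castSucc) (rest m.succ)) *
              V (Fin.last (N+1)) (rest (Fin.last N))) else 0 := by
      intro c rest
      by_cases hc : c = a
      · subst hc
        rw [if_pos (show (Fin.consEquiv β) (c, rest) 0 = c from rfl), if_pos rfl]
        rw [Fin.prod_univ_succ]
        have h1 : ∀ m : Fin N, w m.succ ((Fin.consEquiv β) (c, rest) m.succ.castSucc)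
            ((Fin.consEquiv β) (c, rest) m.succ.succ)
            = w m.succ (rest m.castSucc) (rest m.succ) := by
          intro m
          show w m.succ (Fin.cons c rest m.castSucc.succ) (Fin.cons c rest m.succ.succ) = _
          rw [Fin.cons_succ, Fin.cons_succ]
        rw [Finset.prod_congr rfl (fun m _ => h1 m)]
        exact mul_assoc _ _ _
      · rw [if_neg (show ¬ (Fin.consEquiv β) (c, rest) 0 = a from fun h => hc h), if_neg hc]
    rw [Finset.sum_congr rfl (fun c _ => Finset.sum_congr rfl (fun rest _ => hstep c rest))]
    have hcollapse : ∀ c : β 0, (∑ rest : ∀ m : Fin (N+1), β m.succ,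
        if c = a then w 0 a (rest 0) *
          ((∏ m : Fin N, w m.succ (rest m.castSucc) (rest m.succ)) *
            V (Fin.last (N+1)) (rest (Fin.last N))) else 0)
        = if c = a then (∑ rest : ∀ m : Fin (N+1), β m.succ, w 0 a (rest 0) *
          ((∏ m : Fin N, w m.succ (rest m.castSucc) (rest m.succ)) *
            V (Fin.last (N+1)) (rest (Fin.last N)))) else 0 := by
      intro c; split_ifs <;> simp
    rw [Finset.sum_congr rfl (fun c _ => hcollapse c), Finset.sum_ite_eq' Finset.univ a,
      if_pos (Finset.mem_univ a)]
    -- now: ∑ rest, w 0 a (rest 0) * (...) = V 0 a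
    have hsplit : ∀ rest : ∀ m : Fin (N+1), β m.succ,
        w 0 a (rest 0) * ((∏ m : Fin N, w m.succ (rest m.castSucc) (rest m.succ)) *
            V (Fin.last (N+1)) (rest (Fin.last N)))
        = ∑ c : β (0 : Fin (N+1)).succ, if rest 0 = c then
            w 0 a c * ((∏ m : Fin N, w m.succ (rest m.castSucc) (rest m.succ)) *
            V (Fin.last (N+1)) (rest (Fin.last N))) else 0 := by
      intro rest
      rw [Finset.sum_ite_eq Finset.univ (rest 0), if_pos (Finset.mem_univ _)]
    rw [Finset.sum_congr rfl (fun rest _ => hsplit rest), Finset.sum_comm]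
    have hinner : ∀ c : β (0 : Fin (N+1)).succ,
        (∑ rest : ∀ m : Fin (N+1), β m.succ, if rest 0 = c then
            w 0 a c * ((∏ m : Fin N, w m.succ (rest m.castSucc) (rest m.succ)) *
            V (Fin.last (N+1)) (rest (Fin.last N))) else 0)
        = w 0 a c * V ((0 : Fin (N+1)).succ) c := by
      intro c
      have hIH := IH (fun m => β m.succ) (fun m x y => w m.succ x y) (fun m => V m.succ)
        (fun m a' => hV m.succ a') c
      calc (∑ rest : ∀ m : Fin (N+1), β m.succ, if rest 0 = c then
            w 0 a c * ((∏ m : Fin N, w m.succ (rest m.castSucc) (rest m.succ)) *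
            V (Fin.last (N+1)) (rest (Fin.last N))) else 0)
          = ∑ rest : ∀ m : Fin (N+1), β m.succ, w 0 a c * (if rest 0 = c then
            ((∏ m : Fin N, w m.succ (rest m.castSucc) (rest m.succ)) *
            V (Fin.last (N+1)) (rest (Fin.last N))) else 0) := by
            refine Finset.sum_congr rfl (fun rest _ => ?_)
            rw [mul_ite, mul_zero]
        _ = w 0 a c * V ((0 : Fin (N+1)).succ) c := by
            rw [← Finset.mul_sum]
            exact congrArg (fun z => w 0 a c * z) hIH
    rw [Finset.sum_congr rfl (fun c _ => hinner c)]
    exact (hV 0 a).symm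

/-!
Marginal formula for circle-structured costs via forward matrices (Theorem 4.4):
on the circle graph over `Fin K` (edges `{k, k+1}`, addition mod `K`, node `0` playing
the role of the paper's node `1`), define the forward matrices by `λ^{(0,1)} = 𝒦^{(0,1)}`
and `λ^{(0,k)} = λ^{(0,k−1)}(φ^{k−1} ⊙ 𝒦^{(k−1,k)})` for `k.val ≥ 2`, and the backward
matrices `α^{(ℓ,0)}` by `α^{(ℓ,0)} = 𝒦^{(ℓ,0)}` if `ℓ + 1 = 0` (circular distance 1)
and `α^{(ℓ,0)} = 𝒦^{(ℓ,ℓ+1)}(φ^{ℓ+1} ⊙ α^{(ℓ+1,0)})` otherwise.  Then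
`[P_0(𝒦 ⊙ Φ)]_i = φ^0_i Σ_j 𝒦^{(0,1)}_{i,j} φ^1_j α^{(1,0)}_{j,i}` and, for every
`k ≠ 0`, `[P_k(𝒦 ⊙ Φ)]_i = φ^k_i Σ_j α^{(k,0)}_{i,j} φ^0_j λ^{(0,k)}_{j,i}`.
-/

theorem circle_marginal_formula_forward_matrices
    (K d : ℕ) [NeZero K] (hK : 3 ≤ K) (n : Fin K → ℕ)
    (x : ∀ k, Fin (n k) → EuclideanSpace ℝ (Fin d))
    (η : ℝ) (hη : 0 < η)
    (φ : ∀ k, Fin (n k) → ℝ) (hφ : ∀ k j, 0 < φ k j)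
    (α : ∀ ℓ : Fin K, Fin (n ℓ) → Fin (n 0) → ℝ)
    (hαlast : ∀ ℓ : Fin K, ℓ + 1 = 0 → ∀ (a : Fin (n ℓ)) (b : Fin (n 0)),
      α ℓ a b = Real.exp (-‖x ℓ a - x 0 b‖ ^ 2 / η))
    (hαrec : ∀ ℓ : Fin K, ℓ + 1 ≠ 0 → ℓ ≠ 0 → ∀ (a : Fin (n ℓ)) (b : Fin (n 0)),
      α ℓ a b = ∑ c : Fin (n (ℓ + 1)),
        Real.exp (-‖x ℓ a - x (ℓ + 1) c‖ ^ 2 / η) * (φ (ℓ + 1) c * α (ℓ + 1) c b))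
    (lam : ∀ k : Fin K, Fin (n 0) → Fin (n k) → ℝ)
    (hlam1 : ∀ (a : Fin (n 0)) (b : Fin (n 1)),
      lam 1 a b = Real.exp (-‖x 0 a - x 1 b‖ ^ 2 / η))
    (hlamrec : ∀ k : Fin K, 2 ≤ k.val → ∀ (a : Fin (n 0)) (b : Fin (n k)),
      lam k a b = ∑ c : Fin (n (k - 1)),
        lam (k - 1) a c * (φ (k - 1) c * Real.exp (-‖x (k - 1) c - x k b‖ ^ 2 / η))) :
    (∀ i : Fin (n 0),
      (∑ jj : ∀ t, Fin (n t), if jj 0 = i then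
          Real.exp (-(∑ ℓ, ‖x ℓ (jj ℓ) - x (ℓ + 1) (jj (ℓ + 1))‖ ^ 2) / η)
            * ∏ ℓ, φ ℓ (jj ℓ)
        else 0)
      = φ 0 i * ∑ j : Fin (n 1),
          Real.exp (-‖x 0 i - x 1 j‖ ^ 2 / η) * φ 1 j * α 1 j i) ∧
    (∀ k : Fin K, k ≠ 0 → ∀ i : Fin (n k),
      (∑ jj : ∀ t, Fin (n t), if jj k = i then
          Real.exp (-(∑ ℓ, ‖x ℓ (jj ℓ) - x (ℓ + 1) (jj (ℓ + 1))‖ ^ 2) / η)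
            * ∏ ℓ, φ ℓ (jj ℓ)
        else 0)
      = φ k i * ∑ j : Fin (n 0), α k i j * φ 0 j * lam k j i) := by
  obtain ⟨N, rfl⟩ : ∃ N, K = N + 1 := ⟨K - 1, by omega⟩
  have hN2 : 2 ≤ N := by omega
  have hsummand : ∀ jj : ∀ t, Fin (n t),
      Real.exp (-(∑ ℓ, ‖x ℓ (jj ℓ) - x (ℓ + 1) (jj (ℓ + 1))‖ ^ 2) / η) * ∏ ℓ, φ ℓ (jj ℓ)
      = ∏ ℓ : Fin (N+1), (Gk x η ℓ (ℓ+1) (jj ℓ) (jj (ℓ+1)) * φ ℓ (jj ℓ)) := by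
    intro jj
    rw [Finset.prod_mul_distrib]
    congr 1
    have h1 : (-(∑ ℓ : Fin (N+1), ‖x ℓ (jj ℓ) - x (ℓ + 1) (jj (ℓ + 1))‖ ^ 2) / η)
        = ∑ ℓ : Fin (N+1), (-‖x ℓ (jj ℓ) - x (ℓ + 1) (jj (ℓ + 1))‖ ^ 2 / η) := by
      rw [← Finset.sum_neg_distrib, Finset.sum_div]
    rw [h1, Real.exp_sum]
    rfl
  have hlast01 : (Fin.last N : Fin (N+1)) + 1 = 0 := Fin.last_add_one N
  have hlastne : (Fin.last N : Fin (N+1)) ≠ 0 := by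
    intro h
    have := congrArg Fin.val h
    rw [Fin.val_last, Fin.val_zero] at this
    omega
  constructor
  · -- Part 1
    intro i
    set W : ∀ m : Fin N, Fin (n m.castSucc) → Fin (n m.succ) → ℝ :=
      fun m a c => Gk x η m.castSucc m.succ a c * φ m.castSucc a with hWdef
    set V : ∀ m : Fin (N+1), Fin (n m) → ℝ := fun m b =>
      if h : m = 0 then
        φ 0 (Fin.cast (congrArg n h) b) *
          ∑ j : Fin (n 1), Gk x η 0 1 (Fin.cast (congrArg n h) b) j * φ 1 j * α 1 j i
      else φ m b * α m b i with hVdef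
    have hVrec : ∀ (m : Fin N) (a : Fin (n m.castSucc)),
        V m.castSucc a = ∑ c, W m a c * V m.succ c := by
      intro m a
      have hsne : m.succ ≠ (0 : Fin (N+1)) := Fin.succ_ne_zero m
      have hcs1 : m.castSucc + 1 = m.succ := Fin.coeSucc_eq_succ
      simp only [hVdef, hWdef, dif_neg hsne]
      by_cases hm : m.castSucc = (0 : Fin (N+1))
      · rw [dif_pos hm, Finset.mul_sum]
        have h1 : m.succ = (1 : Fin (N+1)) := by
          rw [Fin.ext_iff] at hm ⊢
          rw [Fin.coe_castSucc] at hm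
          rw [Fin.val_succ, Fin.val_one', hm, Fin.val_zero, Nat.mod_eq_of_lt (by omega)]
        refine sum_node_cast h1.symm _ _ (fun j c hv => ?_)
        have e1 : Gk x η 0 1 (Fin.cast (congrArg n hm) a) j = Gk x η m.castSucc m.succ a c :=
          fin_congr₂ (Gk x η) hm.symm h1.symm (Fin.coe_cast _ _) hv
        have e2 : φ (0 : Fin (N+1)) (Fin.cast (congrArg n hm) a) = φ m.castSucc a :=
          fin_congr₁ φ hm.symm (Fin.coe_cast _ _)
        have e3 : φ (1 : Fin (N+1)) j = φ m.succ c := fin_congr₁ φ h1.symm hv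
        have e4 : α (1 : Fin (N+1)) j i = α m.succ c i :=
          fin_congr₁ (fun t b => α t b i) h1.symm hv
        rw [e1, e2, e3, e4]; ring
      · rw [dif_neg hm]
        have hαr : α m.castSucc a i = ∑ c : Fin (n (m.castSucc + 1)),
            Gk x η m.castSucc (m.castSucc + 1) a c * (φ (m.castSucc + 1) c * α (m.castSucc + 1) c i) :=
          hαrec m.castSucc (by rw [hcs1]; exact hsne) hm a i
        rw [hαr, Finset.mul_sum]
        refine sum_node_cast hcs1 _ _ (fun c c' hv => ?_)
        have e1 : Gk x η m.castSucc (m.castSucc + 1) a c = Gk x η m.castSucc m.succ a c' :=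
          fin_congr₂ (Gk x η) rfl hcs1 rfl hv
        have e3 : φ (m.castSucc + 1) c = φ m.succ c' := fin_congr₁ φ hcs1 hv
        have e4 : α (m.castSucc + 1) c i = α m.succ c' i :=
          fin_congr₁ (fun t b => α t b i) hcs1 hv
        rw [e1, e3, e4]; ring
    calc (∑ jj : ∀ t, Fin (n t), if jj 0 = i then
          Real.exp (-(∑ ℓ, ‖x ℓ (jj ℓ) - x (ℓ + 1) (jj (ℓ + 1))‖ ^ 2) / η)
            * ∏ ℓ, φ ℓ (jj ℓ) else 0)
        = ∑ jj : ∀ t, Fin (n t), (if jj 0 = i then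
            (∏ m : Fin N, W m (jj m.castSucc) (jj m.succ)) * V (Fin.last N) (jj (Fin.last N))
          else 0) := by
          refine Finset.sum_congr rfl (fun jj _ => ?_)
          by_cases h0 : jj 0 = i
          · rw [if_pos h0, if_pos h0, hsummand jj, Fin.prod_univ_castSucc]
            have hF : ∀ m : Fin N,
                Gk x η m.castSucc (m.castSucc + 1) (jj m.castSucc) (jj (m.castSucc + 1)) *
                  φ m.castSucc (jj m.castSucc) = W m (jj m.castSucc) (jj m.succ) := by
              intro m
              have hcs1 : m.castSucc + 1 = m.succ := Fin.coeSucc_eq_succ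
              have e1 : Gk x η m.castSucc (m.castSucc + 1) (jj m.castSucc) (jj (m.castSucc + 1))
                  = Gk x η m.castSucc m.succ (jj m.castSucc) (jj m.succ) :=
                fin_congr₂ (Gk x η) rfl hcs1 rfl (jj_val_congr jj hcs1)
              rw [e1, hWdef]
            rw [Finset.prod_congr rfl (fun m _ => hF m)]
            congr 1
            have e1 : Gk x η (Fin.last N) (Fin.last N + 1) (jj (Fin.last N)) (jj (Fin.last N + 1))
                = Gk x η (Fin.last N) 0 (jj (Fin.last N)) (jj 0) :=
              fin_congr₂ (Gk x η) rfl hlast01 rfl (jj_val_congr jj hlast01)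
            rw [e1, h0]
            have hαl : α (Fin.last N) (jj (Fin.last N)) i
                = Gk x η (Fin.last N) 0 (jj (Fin.last N)) i := hαlast (Fin.last N) hlast01 _ i
            simp only [hVdef, dif_neg hlastne]
            rw [hαl]
            ring
          · rw [if_neg h0, if_neg h0]
      _ = V 0 i := chain_sum_eq N (fun m => Fin (n m)) W V hVrec i
      _ = φ 0 i * ∑ j : Fin (n 1),
            Real.exp (-‖x 0 i - x 1 j‖ ^ 2 / η) * φ 1 j * α 1 j i := by
          simp only [hVdef]
          split
          · rfl
          · exact absurd trivial ‹_›
  · -- Part 2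
    intro k hk0 i
    letI : NatCast (Fin (N+1)) := (Fin.instAddMonoidWithOne (N+1)).toNatCast
    have kb : k.val < N + 1 := k.isLt
    have hkv0 : k.val ≠ 0 := by
      intro h
      exact hk0 (Fin.ext (by rw [h, Fin.val_zero]))
    set m0 : ℕ := N + 1 - k.val with hm0def
    have hone : ((1 : Fin (N+1)) : ℕ) = 1 := by
      rw [Fin.val_one']; exact Nat.mod_eq_of_lt (by omega)
    have hnatval : ∀ a : ℕ, a < N + 1 → ((a : Fin (N+1)) : ℕ) = a := by
      intro a ha; rw [Fin.val_natCast]; exact Nat.mod_eq_of_lt ha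
    have haddval : ∀ m : Fin (N+1), ((k + m : Fin (N+1)) : ℕ)
        = if k.val + m.val < N+1 then k.val + m.val else k.val + m.val - (N+1) := by
      intro m
      rw [Fin.val_add_eq_ite]
      have := m.isLt
      split_ifs <;> omega
    have hnode0 : ∀ m : Fin (N+1), (k + m = 0) ↔ m.val = m0 := by
      intro m
      rw [Fin.ext_iff, Fin.val_zero, haddval]
      have := m.isLt
      split_ifs <;> omega
    have hstep : ∀ m : Fin N, (k + m.castSucc) + 1 = k + m.succ := by
      intro m
      have hmv := m.isLt
      have h1 := haddval m.castSucc
      have h2 := haddval m.succ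
      have h3 := Fin.val_add_eq_ite (k + m.castSucc) (1 : Fin (N+1))
      rw [Fin.coe_castSucc] at h1
      rw [Fin.val_succ] at h2
      rw [hone] at h3
      apply Fin.ext
      rw [h3, h1, h2]
      split_ifs <;> omega
    have hRfun0 : ∀ (ν : Fin (N+1)) (b : Fin (n ν)),
        Rfun (Gk x η) φ k i 0 ν b = Gk x η ν k b i := fun ν b => rfl
    have hRfunS : ∀ (ρ : ℕ) (ν : Fin (N+1)) (b : Fin (n ν)),
        Rfun (Gk x η) φ k i (ρ+1) ν b
        = ∑ c : Fin (n (ν + 1)), Gk x η ν (ν+1) b c * (φ (ν+1) c * Rfun (Gk x η) φ k i ρ (ν+1) c) :=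
      fun ρ ν b => rfl
    -- the lam / Rfun bridging lemma
    have LamR : ∀ s : ℕ, 2 + s ≤ k.val → ∀ a' : Fin (n 0),
        lam k a' i = ∑ c : Fin (n ((k.val - 1 - s : ℕ) : Fin (N+1))),
          lam ((k.val - 1 - s : ℕ) : Fin (N+1)) a' c *
            (φ ((k.val - 1 - s : ℕ) : Fin (N+1)) c *
              Rfun (Gk x η) φ k i s ((k.val - 1 - s : ℕ) : Fin (N+1)) c) := by
      intro s
      induction s with
      | zero =>
        intro hs a'
        set t0 : Fin (N+1) := ((k.val - 1 - 0 : ℕ) : Fin (N+1)) with ht0def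
        have hadd : t0 + 1 = k := by
          apply Fin.ext
          rw [Fin.val_add_eq_ite, hone, hnatval _ (by omega)]
          split_ifs <;> omega
        have ht : k - 1 = t0 := by
          rw [← hadd, add_sub_cancel_right]
        have hl := hlamrec k (by omega) a' i
        rw [hl]
        refine sum_node_cast ht _ _ (fun c c' hv => ?_)
        have e1 : lam (k - 1) a' c = lam t0 a' c' :=
          fin_congr₁ (fun u b => lam u a' b) ht hv
        have e2 : φ (k - 1) c = φ t0 c' := fin_congr₁ φ ht hv
        have e3 : Real.exp (-‖x (k - 1) c - x k i‖ ^ 2 / η)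
            = Gk x η t0 k c' i :=
          fin_congr₂ (Gk x η) ht rfl hv rfl
        rw [e1, e2, e3, hRfun0]
      | succ s IH =>
        intro hs a'
        set t1 : Fin (N+1) := ((k.val - 1 - s : ℕ) : Fin (N+1)) with ht1def
        set t2 : Fin (N+1) := ((k.val - 1 - (s+1) : ℕ) : Fin (N+1)) with ht2def
        have ht1v : (t1 : ℕ) = k.val - 1 - s := hnatval _ (by omega)
        have ht2v : (t2 : ℕ) = k.val - 1 - (s+1) := hnatval _ (by omega)
        have ht21 : t2 + 1 = t1 := by
          apply Fin.ext
          rw [Fin.val_add_eq_ite, hone, ht1v, ht2v]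
          split_ifs <;> omega
        have ht1sub : t1 - 1 = t2 := by rw [← ht21, add_sub_cancel_right]
        rw [IH (by omega) a']
        symm
        calc ∑ c : Fin (n t2), lam t2 a' c * (φ t2 c * Rfun (Gk x η) φ k i (s+1) t2 c)
            = ∑ c : Fin (n t2), ∑ c' : Fin (n (t2 + 1)),
                lam t2 a' c * (φ t2 c * (Gk x η t2 (t2+1) c c' *
                  (φ (t2+1) c' * Rfun (Gk x η) φ k i s (t2+1) c'))) := by
              refine Finset.sum_congr rfl (fun c _ => ?_)
              rw [hRfunS, Finset.mul_sum, Finset.mul_sum]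
          _ = ∑ c' : Fin (n (t2 + 1)), ∑ c : Fin (n t2),
                lam t2 a' c * (φ t2 c * (Gk x η t2 (t2+1) c c' *
                  (φ (t2+1) c' * Rfun (Gk x η) φ k i s (t2+1) c'))) := Finset.sum_comm
          _ = ∑ c'' : Fin (n t1), lam t1 a' c'' * (φ t1 c'' * Rfun (Gk x η) φ k i s t1 c'') := by
              refine sum_node_cast ht21 _ _ (fun c' c'' hv => ?_)
              have hlr := hlamrec t1 (by rw [ht1v]; omega) a' c''
              rw [ht1sub] at hlr
              have e4 : φ (t2+1) c' = φ t1 c'' := fin_congr₁ φ ht21 hv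
              have e5 : Rfun (Gk x η) φ k i s (t2+1) c' = Rfun (Gk x η) φ k i s t1 c'' :=
                fin_congr₁ (Rfun (Gk x η) φ k i s) ht21 hv
              rw [hlr, Finset.sum_mul]
              refine Finset.sum_congr rfl (fun c _ => ?_)
              have e6 : Gk x η t2 (t2+1) c c' = Real.exp (-‖x t2 c - x t1 c''‖ ^ 2 / η) :=
                fin_congr₂ (Gk x η) rfl ht21 rfl hv
              rw [e4, e5, e6]
              ring
    -- chain data
    obtain ⟨i', hi'def⟩ : ∃ v : Fin (n (k + 0)), v = Fin.cast (congrArg n (add_zero k).symm) i :=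
      ⟨_, rfl⟩
    obtain ⟨W2, hW2def⟩ : ∃ v : ∀ m : Fin N, Fin (n (k + m.castSucc)) → Fin (n (k + m.succ)) → ℝ,
        v = fun (m : Fin N) a c => Gk x η (k + m.castSucc) (k + m.succ) a c * φ (k + m.castSucc) a :=
      ⟨_, rfl⟩
    obtain ⟨V2, hV2def⟩ : ∃ v : ∀ m : Fin (N+1), Fin (n (k + m)) → ℝ, v = fun (m : Fin (N+1)) b =>
        if h : k + m = 0 then φ (k + m) b * lam k (Fin.cast (congrArg n h) b) i
        else if m.val < m0 then φ (k + m) b * ∑ j : Fin (n 0), α (k + m) b j * φ 0 j * lam k j i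
        else φ (k + m) b * Rfun (Gk x η) φ k i (N - m.val) (k + m) b :=
      ⟨_, rfl⟩
    have hVrec2 : ∀ (m : Fin N) (a : Fin (n (k + m.castSucc))),
        V2 m.castSucc a = ∑ c, W2 m a c * V2 m.succ c := by
      intro m a
      have hmv := m.isLt
      have hstepm := hstep m
      simp only [hV2def, hW2def]
      rcases lt_trichotomy (m.val + 1) m0 with hA | hB | hD
      · -- case A : both strictly before node 0
        have hcne : ¬ (k + m.castSucc = 0) := by rw [hnode0]; rw [Fin.coe_castSucc]; omega
        have hsne : ¬ (k + m.succ = 0) := by rw [hnode0]; rw [Fin.val_succ]; omega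
        rw [dif_neg hcne, if_pos (show (m.castSucc).val < m0 by rw [Fin.coe_castSucc]; omega)]
        simp only [dif_neg hsne, if_pos (show (m.succ).val < m0 by rw [Fin.val_succ]; omega)]
        have hαr : ∀ j : Fin (n 0), α (k + m.castSucc) a j
            = ∑ c : Fin (n (k + m.succ)), Gk x η (k + m.castSucc) (k + m.succ) a c *
                (φ (k + m.succ) c * α (k + m.succ) c j) := by
          intro j
          have h := hαrec (k + m.castSucc) (by rw [hstepm]; exact hsne) hcne a j
          rw [hstepm] at h
          exact h
        calc φ (k + m.castSucc) a * ∑ j : Fin (n 0),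
              α (k + m.castSucc) a j * φ 0 j * lam k j i
            = ∑ j : Fin (n 0), ∑ c : Fin (n (k + m.succ)),
                φ (k + m.castSucc) a * (Gk x η (k + m.castSucc) (k + m.succ) a c *
                  (φ (k + m.succ) c * α (k + m.succ) c j)) * φ 0 j * lam k j i := by
              rw [Finset.mul_sum]
              refine Finset.sum_congr rfl (fun j _ => ?_)
              rw [hαr j, Finset.sum_mul, Finset.sum_mul, Finset.mul_sum]
              refine Finset.sum_congr rfl (fun c _ => ?_)
              ring
          _ = ∑ c : Fin (n (k + m.succ)), ∑ j : Fin (n 0),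
                φ (k + m.castSucc) a * (Gk x η (k + m.castSucc) (k + m.succ) a c *
                  (φ (k + m.succ) c * α (k + m.succ) c j)) * φ 0 j * lam k j i := Finset.sum_comm
          _ = ∑ c : Fin (n (k + m.succ)),
                Gk x η (k + m.castSucc) (k + m.succ) a c * φ (k + m.castSucc) a *
                  (φ (k + m.succ) c * ∑ j : Fin (n 0), α (k + m.succ) c j * φ 0 j * lam k j i) := by
              refine Finset.sum_congr rfl (fun c _ => ?_)
              rw [Finset.mul_sum, Finset.mul_sum]
              refine Finset.sum_congr rfl (fun j _ => ?_)
              ring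
      · -- case B : succ is node 0
        have hcne : ¬ (k + m.castSucc = 0) := by rw [hnode0]; rw [Fin.coe_castSucc]; omega
        have hseq : k + m.succ = 0 := by rw [hnode0]; rw [Fin.val_succ]; omega
        rw [dif_neg hcne, if_pos (show (m.castSucc).val < m0 by rw [Fin.coe_castSucc]; omega)]
        simp only [dif_pos hseq]
        have hαl : ∀ j : Fin (n 0), α (k + m.castSucc) a j = Gk x η (k + m.castSucc) 0 a j :=
          fun j => hαlast (k + m.castSucc) (by rw [hstepm]; exact hseq) a j
        rw [Finset.mul_sum]
        refine sum_node_cast hseq.symm _ _ (fun j c hv => ?_)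
        have e1 : Gk x η (k + m.castSucc) 0 a j = Gk x η (k + m.castSucc) (k + m.succ) a c :=
          fin_congr₂ (Gk x η) rfl hseq.symm rfl hv
        have e2 : φ (0 : Fin (N+1)) j = φ (k + m.succ) c := fin_congr₁ φ hseq.symm hv
        have e3 : j = Fin.cast (congrArg n hseq) c := by
          apply Fin.ext
          rw [Fin.coe_cast]; exact hv
        rw [hαl j, e1, e2, e3]
        ring
      · -- cases C/D : castSucc at or after node 0
        have hsne : ¬ (k + m.succ = 0) := by rw [hnode0]; rw [Fin.val_succ]; omega
        have hsnlt : ¬ ((m.succ).val < m0) := by rw [Fin.val_succ]; omega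
        simp only [dif_neg hsne, if_neg hsnlt]
        rcases Nat.eq_or_lt_of_le (show m0 ≤ m.val by omega) with hC | hD'
        · -- case C : castSucc is node 0 (m.val = m0)
          have hmeq : m.val = m0 := hC.symm
          have hceq : k + m.castSucc = 0 := by rw [hnode0]; rw [Fin.coe_castSucc]; omega
          have hk2 : 2 ≤ k.val := by omega
          rw [dif_pos hceq]
          set t : Fin (N+1) := ((k.val - 1 - (k.val - 2) : ℕ) : Fin (N+1)) with htdef
          have htv : (t : ℕ) = 1 := by rw [hnatval _ (by omega)]; omega
          have hteq : t = k + m.succ := by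
            apply Fin.ext
            rw [htv, haddval, Fin.val_succ]
            split_ifs <;> omega
          have hNms : N - (m.succ).val = k.val - 2 := by rw [Fin.val_succ]; omega
          rw [LamR (k.val - 2) (by omega) (Fin.cast (congrArg n hceq) a), Finset.mul_sum]
          refine sum_node_cast hteq _ _ (fun c c' hv => ?_)
          have ht1 : t = 1 := by apply Fin.ext; rw [htv, hone]
          have e0 : lam t (Fin.cast (congrArg n hceq) a) c
              = lam 1 (Fin.cast (congrArg n hceq) a) (Fin.cast (congrArg n ht1) c) :=
            fin_congr₁ (fun u b => lam u (Fin.cast (congrArg n hceq) a) b) ht1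
              (by rw [Fin.coe_cast])
          have e1 : lam 1 (Fin.cast (congrArg n hceq) a) (Fin.cast (congrArg n ht1) c)
              = Gk x η 0 1 (Fin.cast (congrArg n hceq) a) (Fin.cast (congrArg n ht1) c) :=
            hlam1 _ _
          have e2 : Gk x η 0 1 (Fin.cast (congrArg n hceq) a) (Fin.cast (congrArg n ht1) c)
              = Gk x η (k + m.castSucc) (k + m.succ) a c' := by
            refine fin_congr₂ (Gk x η) hceq.symm ?_ (by rw [Fin.coe_cast]) ?_
            · rw [← ht1, hteq]
            · rw [Fin.coe_cast]; exact hv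
          have e3 : φ t c = φ (k + m.succ) c' := fin_congr₁ φ hteq hv
          have e4 : Rfun (Gk x η) φ k i (k.val - 2) t c
              = Rfun (Gk x η) φ k i (N - (m.succ).val) (k + m.succ) c' := by
            rw [hNms]
            exact fin_congr₁ (Rfun (Gk x η) φ k i (k.val - 2)) hteq hv
          rw [e0, e1, e2, e3, e4]
          ring
        · -- case D : both after node 0
          have hcne : ¬ (k + m.castSucc = 0) := by rw [hnode0]; rw [Fin.coe_castSucc]; omega
          have hcnlt : ¬ ((m.castSucc).val < m0) := by rw [Fin.coe_castSucc]; omega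
          rw [dif_neg hcne, if_neg hcnlt]
          have hNm : N - (m.castSucc).val = (N - (m.succ).val) + 1 := by
            rw [Fin.coe_castSucc, Fin.val_succ]; omega
          rw [hNm, hRfunS, Finset.mul_sum]
          refine sum_node_cast hstepm _ _ (fun c c' hv => ?_)
          have e1 : Gk x η (k + m.castSucc) ((k + m.castSucc) + 1) a c
              = Gk x η (k + m.castSucc) (k + m.succ) a c' :=
            fin_congr₂ (Gk x η) rfl hstepm rfl hv
          have e2 : φ ((k + m.castSucc) + 1) c = φ (k + m.succ) c' := fin_congr₁ φ hstepm hv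
          have e3 : Rfun (Gk x η) φ k i (N - (m.succ).val) ((k + m.castSucc) + 1) c
              = Rfun (Gk x η) φ k i (N - (m.succ).val) (k + m.succ) c' :=
            fin_congr₁ (Rfun (Gk x η) φ k i (N - (m.succ).val)) hstepm hv
          rw [e1, e2, e3]
          ring
    -- assemble
    calc (∑ jj : ∀ t, Fin (n t), if jj k = i then
            Real.exp (-(∑ ℓ, ‖x ℓ (jj ℓ) - x (ℓ + 1) (jj (ℓ + 1))‖ ^ 2) / η)
              * ∏ ℓ, φ ℓ (jj ℓ) else 0)
        = ∑ r : ∀ m : Fin (N+1), Fin (n (k + m)), (if r 0 = i' then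
              ∏ m : Fin (N+1), (Gk x η (k+m) (k+(m+1)) (r m) (r (m+1)) * φ (k+m) (r m))
            else 0) := by
          refine Fintype.sum_equiv
            (Equiv.piCongrLeft' (fun t : Fin (N+1) => Fin (n t)) (Equiv.addLeft k).symm)
            _ _ (fun jj => ?_)
          simp only [Equiv.piCongrLeft'_apply, Equiv.symm_symm, Equiv.coe_addLeft]
          have hcond : (jj (k + 0) = i') ↔ (jj k = i) := by
            simp only [Fin.ext_iff]
            rw [hi'def, Fin.coe_cast, jj_val_congr jj (add_zero k)]
          have hbody : (∏ m : Fin (N+1), (Gk x η (k+m) (k+(m+1)) (jj (k+m)) (jj (k+(m+1))) * φ (k+m) (jj (k+m))))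
              = Real.exp (-(∑ ℓ, ‖x ℓ (jj ℓ) - x (ℓ + 1) (jj (ℓ + 1))‖ ^ 2) / η)
                * ∏ ℓ, φ ℓ (jj ℓ) := by
            rw [hsummand jj]
            rw [← Equiv.prod_comp (Equiv.addLeft k)
              (fun ℓ => Gk x η ℓ (ℓ+1) (jj ℓ) (jj (ℓ+1)) * φ ℓ (jj ℓ))]
            refine Finset.prod_congr rfl (fun m _ => ?_)
            have e1 : Gk x η (k+m) ((k+m)+1) (jj (k+m)) (jj ((k+m)+1))
                = Gk x η (k+m) (k+(m+1)) (jj (k+m)) (jj (k+(m+1))) :=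
              fin_congr₂ (Gk x η) rfl (add_assoc k m 1) rfl (jj_val_congr jj (add_assoc k m 1))
            exact e1 ▸ rfl
          exact (if_congr hcond hbody rfl).symm
      _ = ∑ r : ∀ m : Fin (N+1), Fin (n (k + m)), (if r 0 = i' then
            (∏ m : Fin N, W2 m (r m.castSucc) (r m.succ)) * V2 (Fin.last N) (r (Fin.last N))
          else 0) := by
          refine Finset.sum_congr rfl (fun r _ => ?_)
          by_cases h0 : r 0 = i'
          · rw [if_pos h0, if_pos h0, Fin.prod_univ_castSucc]
            congr 1
            · refine Finset.prod_congr rfl (fun m _ => ?_)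
              have hnd : k + (m.castSucc + 1) = k + m.succ :=
                congrArg (fun z => k + z) Fin.coeSucc_eq_succ
              have e1 : Gk x η (k + m.castSucc) (k + (m.castSucc + 1)) (r m.castSucc) (r (m.castSucc + 1))
                  = Gk x η (k + m.castSucc) (k + m.succ) (r m.castSucc) (r m.succ) :=
                fin_congr₂ (Gk x η) rfl hnd rfl (jj_val_congr r Fin.coeSucc_eq_succ)
              rw [e1, hW2def]
            · -- last factor
              have hnd0 : k + ((Fin.last N) + 1) = k + 0 := congrArg (fun z => k + z) hlast01
              have hrv : ((r (Fin.last N + 1)) : ℕ) = (i' : ℕ) := by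
                rw [jj_val_congr r hlast01, h0]
              have e1 : Gk x η (k + Fin.last N) (k + (Fin.last N + 1)) (r (Fin.last N)) (r (Fin.last N + 1))
                  = Gk x η (k + Fin.last N) (k + 0) (r (Fin.last N)) i' :=
                fin_congr₂ (Gk x η) rfl hnd0 rfl hrv
              rw [e1]
              simp only [hV2def]
              by_cases hk1 : k.val = 1
              · have h0l : k + Fin.last N = 0 := by
                  rw [hnode0, Fin.val_last]; omega
                rw [dif_pos h0l]
                have hk1' : k = 1 := by apply Fin.ext; rw [hone]; exact hk1
                have hk0eq : (1 : Fin (N+1)) = k + 0 := by rw [add_zero, hk1']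
                have e2 : lam k (Fin.cast (congrArg n h0l) (r (Fin.last N))) i
                    = lam 1 (Fin.cast (congrArg n h0l) (r (Fin.last N))) (Fin.cast (congrArg n hk1') i) :=
                  fin_congr₁ (fun u b => lam u (Fin.cast (congrArg n h0l) (r (Fin.last N))) b) hk1'
                    (by rw [Fin.coe_cast])
                have e3 : lam 1 (Fin.cast (congrArg n h0l) (r (Fin.last N))) (Fin.cast (congrArg n hk1') i)
                    = Gk x η 0 1 (Fin.cast (congrArg n h0l) (r (Fin.last N))) (Fin.cast (congrArg n hk1') i) :=
                  hlam1 _ _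
                have e4 : Gk x η 0 1 (Fin.cast (congrArg n h0l) (r (Fin.last N))) (Fin.cast (congrArg n hk1') i)
                    = Gk x η (k + Fin.last N) (k + 0) (r (Fin.last N)) i' := by
                  refine fin_congr₂ (Gk x η) h0l.symm hk0eq (by rw [Fin.coe_cast]) ?_
                  rw [Fin.coe_cast, hi'def, Fin.coe_cast]
                rw [e2, e3, e4]
                ring
              · have h0l : ¬ (k + Fin.last N = 0) := by
                  rw [hnode0, Fin.val_last]; omega
                have hnlt : ¬ ((Fin.last N).val < m0) := by rw [Fin.val_last]; omega
                rw [dif_neg h0l, if_neg hnlt]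
                have hN0 : N - (Fin.last N).val = 0 := by rw [Fin.val_last]; omega
                rw [hN0, hRfun0]
                have e2 : Gk x η (k + Fin.last N) k (r (Fin.last N)) i
                    = Gk x η (k + Fin.last N) (k + 0) (r (Fin.last N)) i' :=
                  fin_congr₂ (Gk x η) rfl (add_zero k).symm rfl (by rw [hi'def, Fin.coe_cast])
                rw [e2]
                ring
          · rw [if_neg h0, if_neg h0]
      _ = V2 0 i' := chain_sum_eq N (fun m => Fin (n (k + m))) W2 V2 hVrec2 i'
      _ = φ k i * ∑ j : Fin (n 0), α k i j * φ 0 j * lam k j i := by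
          simp only [hV2def]
          have h00 : ¬ (k + (0 : Fin (N+1)) = 0) := by
            rw [hnode0, Fin.val_zero]; omega
          have hlt : (0 : Fin (N+1)).val < m0 := by rw [Fin.val_zero]; omega
          rw [dif_neg h00, if_pos hlt]
          have e1 : φ (k + 0) i' = φ k i := fin_congr₁ φ (add_zero k) (by rw [hi'def, Fin.coe_cast])
          rw [e1]
          congr 1
          refine Finset.sum_congr rfl (fun j _ => ?_)
          have e2 : α (k + 0) i' j = α k i j :=
            fin_congr₁ (fun t b => α t b j) (add_zero k) (by rw [hi'def, Fin.coe_cast])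
          rw [e2]
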